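/- In the algebra A_n^! (path algebra of the An-type doubled quiver modulo (i|i−1|i) = (i|i+1|i) and (1|0|1) = 0), the element c = Σ_{i=2}^{n} (i|i−1|i) satisfies c^n = 0 but c^{n−1} ≠ 0. -/

import Mathlib

/-- Generators for the path algebra of the doubled A_n quiver:
idempotents `vert i` at the vertices, arrows `up i : i → i+1` and `down i : i+1 → i`
(0-indexed). -/
inductive PathGen (n : ℕ)
  | vert : Fin n → PathGen n
  | up : Fin (n - 1) → PathGen n
  | down : Fin (n - 1) → PathGen n

/-- Source vertex of the `i`-th pair of arrows. -/
def PathGen.src {n : ℕ} (i : Fin (n - 1)) : Fin n := ⟨i.1, by have := i.2; omega⟩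

/-- Target vertex of the `i`-th pair of arrows. -/
def PathGen.tgt {n : ℕ} (i : Fin (n - 1)) : Fin n := ⟨i.1 + 1, by have := i.2; omega⟩

/-- Relations presenting `A_n^!`: the path-algebra relations (orthogonal idempotents
summing to `1`, arrows composable only through their endpoints) together with the
relations `(i|i-1|i) = (i|i+1|i)` for `i = 1,…,n-1`, where `(1|0|1) = 0`.
Products are written in composition order (rightmost factor acts first). -/
inductive PathRel (k : Type*) [Field k] (n : ℕ) :
    FreeAlgebra k (PathGen n) → FreeAlgebra k (PathGen n) → Prop
  | mul_vert (a b : Fin n) :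
      PathRel k n (FreeAlgebra.ι k (PathGen.vert a) * FreeAlgebra.ι k (PathGen.vert b))
        (if a = b then FreeAlgebra.ι k (PathGen.vert a) else 0)
  | sum_vert :
      PathRel k n (∑ a : Fin n, FreeAlgebra.ι k (PathGen.vert a)) 1
  | up_src (i : Fin (n - 1)) :
      PathRel k n (FreeAlgebra.ι k (PathGen.up i) * FreeAlgebra.ι k (PathGen.vert (PathGen.src i)))
        (FreeAlgebra.ι k (PathGen.up i))
  | tgt_up (i : Fin (n - 1)) :
      PathRel k n (FreeAlgebra.ι k (PathGen.vert (PathGen.tgt i)) * FreeAlgebra.ι k (PathGen.up i))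
        (FreeAlgebra.ι k (PathGen.up i))
  | down_tgt (i : Fin (n - 1)) :
      PathRel k n (FreeAlgebra.ι k (PathGen.down i) * FreeAlgebra.ι k (PathGen.vert (PathGen.tgt i)))
        (FreeAlgebra.ι k (PathGen.down i))
  | src_down (i : Fin (n - 1)) :
      PathRel k n (FreeAlgebra.ι k (PathGen.vert (PathGen.src i)) * FreeAlgebra.ι k (PathGen.down i))
        (FreeAlgebra.ι k (PathGen.down i))
  | loop_first (i : Fin (n - 1)) (h : (i : ℕ) = 0) :
      PathRel k n (FreeAlgebra.ι k (PathGen.down i) * FreeAlgebra.ι k (PathGen.up i)) 0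
  | loop_eq (i j : Fin (n - 1)) (h : (j : ℕ) = (i : ℕ) + 1) :
      PathRel k n (FreeAlgebra.ι k (PathGen.up i) * FreeAlgebra.ι k (PathGen.down i))
        (FreeAlgebra.ι k (PathGen.down j) * FreeAlgebra.ι k (PathGen.up j))

/-- The algebra `A_n^!`. -/
abbrev PathAlg (k : Type*) [Field k] (n : ℕ) := RingQuot (PathRel k n)

/-- The element `c = (2|1|2) + (3|2|3) + ⋯ + (n|n-1|n)`. -/
noncomputable def cElt (k : Type*) [Field k] (n : ℕ) : PathAlg k n :=
  ∑ i : Fin (n - 1),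
    RingQuot.mkAlgHom k (PathRel k n) (FreeAlgebra.ι k (PathGen.up i)) *
      RingQuot.mkAlgHom k (PathRel k n) (FreeAlgebra.ι k (PathGen.down i))

/-! ### Auxiliary material for the proof -/

open scoped Classical

section Aux

variable (k : Type*) [Field k] (n : ℕ)

/-- The representation space: functions on (vertex, degree) pairs. -/
abbrev WSp := (Fin n × ℕ) → k

/-- A "monomial" operator: `(op C g f) p = f (g p)` when `C p`, else `0`. -/
noncomputable def opE (C : Fin n × ℕ → Prop) (g : Fin n × ℕ → Fin n × ℕ) :
    Module.End k (WSp k n) where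
  toFun f := fun p => if C p then f (g p) else 0
  map_add' f f' := by funext p; by_cases h : C p <;> simp [h]
  map_smul' c f := by funext p; by_cases h : C p <;> simp [h]

variable {k n}

lemma opE_apply (C : Fin n × ℕ → Prop) (g : Fin n × ℕ → Fin n × ℕ) (f : WSp k n)
    (p : Fin n × ℕ) : opE k n C g f p = if C p then f (g p) else 0 := rfl

lemma opE_mul (C C' : Fin n × ℕ → Prop) (g g' : Fin n × ℕ → Fin n × ℕ) :
    opE k n C g * opE k n C' g' =
      opE k n (fun p => C p ∧ C' (g p)) (fun p => g' (g p)) := by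
  apply LinearMap.ext; intro f; funext p
  rw [Module.End.mul_apply]
  simp only [opE_apply]
  by_cases h : C p
  · by_cases h' : C' (g p) <;> simp [h, h']
  · simp [h]

lemma opE_congr {C C' : Fin n × ℕ → Prop} {g g' : Fin n × ℕ → Fin n × ℕ}
    (h : ∀ p, (C p ↔ C' p) ∧ (C p → g p = g' p)) : opE k n C g = opE k n C' g' := by
  apply LinearMap.ext; intro f; funext p
  simp only [opE_apply]
  by_cases hp : C p
  · rw [if_pos hp, if_pos ((h p).1.mp hp), (h p).2 hp]
  · rw [if_neg hp, if_neg (fun h' => hp ((h p).1.mpr h'))]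

lemma opE_zero {C : Fin n × ℕ → Prop} {g : Fin n × ℕ → Fin n × ℕ}
    (h : ∀ p, ¬ C p) : opE k n C g = 0 := by
  apply LinearMap.ext; intro f; funext p
  simp [opE_apply, h p]

variable (k n)

/-- The representation of the generators. -/
noncomputable def repGen : PathGen n → Module.End k (WSp k n)
  | .vert a => opE k n (fun p => p.1 = a) id
  | .up i => opE k n (fun p => p.1 = PathGen.tgt i ∧ 1 ≤ p.2)
      (fun p => (PathGen.src i, p.2 - 1))
  | .down i => opE k n (fun p => p.1 = PathGen.src i ∧ p.2 ≤ i.1)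
      (fun p => (PathGen.tgt i, p.2))

/-- The representation on the free algebra. -/
noncomputable def repFree : FreeAlgebra k (PathGen n) →ₐ[k] Module.End k (WSp k n) :=
  FreeAlgebra.lift k (repGen k n)

lemma repFree_rel : ∀ ⦃x y : FreeAlgebra k (PathGen n)⦄, PathRel k n x y →
    repFree k n x = repFree k n y := by
  intro x y h
  induction h with
  | mul_vert a b =>
      rw [map_mul, apply_ite (repFree k n), map_zero]
      simp only [repFree, FreeAlgebra.lift_ι_apply, repGen, opE_mul]
      by_cases hab : a = b
      · subst hab
        rw [if_pos rfl]
        exact opE_congr (fun p => ⟨by simp, fun _ => rfl⟩)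
      · rw [if_neg hab]
        exact opE_zero (fun p => by rintro ⟨h1, h2⟩; exact hab (h1.symm.trans h2))
  | sum_vert =>
      rw [map_sum, map_one]
      simp only [repFree, FreeAlgebra.lift_ι_apply, repGen]
      apply LinearMap.ext; intro f; funext p
      rw [LinearMap.coe_sum, Finset.sum_apply, Finset.sum_apply]
      simp only [opE_apply, id]
      simp
  | up_src i =>
      simp only [map_mul, repFree, FreeAlgebra.lift_ι_apply, repGen, opE_mul]
      exact opE_congr (fun p => ⟨by simp, fun _ => rfl⟩)
  | tgt_up i =>
      simp only [map_mul, repFree, FreeAlgebra.lift_ι_apply, repGen, opE_mul]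
      exact opE_congr (fun p => ⟨by tauto, fun _ => rfl⟩)
  | down_tgt i =>
      simp only [map_mul, repFree, FreeAlgebra.lift_ι_apply, repGen, opE_mul]
      exact opE_congr (fun p => ⟨by simp, fun _ => rfl⟩)
  | src_down i =>
      simp only [map_mul, repFree, FreeAlgebra.lift_ι_apply, repGen, opE_mul]
      exact opE_congr (fun p => ⟨by tauto, fun _ => rfl⟩)
  | loop_first i h =>
      rw [map_mul, map_zero]
      simp only [repFree, FreeAlgebra.lift_ι_apply, repGen, opE_mul]
      apply opE_zero
      rintro p ⟨⟨-, h2⟩, -, h4⟩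
      omega
  | loop_eq i j h =>
      simp only [map_mul, repFree, FreeAlgebra.lift_ι_apply, repGen, opE_mul]
      apply opE_congr
      intro p
      have hst : PathGen.tgt i = PathGen.src j (n := n) := by
        apply Fin.ext; simp [PathGen.tgt, PathGen.src, h]
      constructor
      · constructor
        · rintro ⟨⟨h1, h2⟩, -, h3⟩
          refine ⟨⟨h1.trans hst, by omega⟩, by trivial, h2⟩
        · rintro ⟨⟨h1, h2⟩, -, h3⟩
          refine ⟨⟨h1.trans hst.symm, h3⟩, by trivial, by omega⟩
      · rintro ⟨⟨h1, h2⟩, -, h3⟩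
        simp [hst]

/-- The representation of `A_n^!`. -/
noncomputable def repA : PathAlg k n →ₐ[k] Module.End k (WSp k n) :=
  RingQuot.liftAlgHom k ⟨repFree k n, repFree_rel k n⟩

lemma repA_gen (x : PathGen n) :
    repA k n (RingQuot.mkAlgHom k (PathRel k n) (FreeAlgebra.ι k x)) = repGen k n x := by
  rw [repA, RingQuot.liftAlgHom_mkAlgHom_apply]
  exact FreeAlgebra.lift_ι_apply _ _

/-! ### Algebraic normal forms in `A_n^!` -/

/-- Image of a vertex idempotent. -/
noncomputable def eV (a : Fin n) : PathAlg k n :=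
  RingQuot.mkAlgHom k (PathRel k n) (FreeAlgebra.ι k (PathGen.vert a))

/-- Image of an up arrow. -/
noncomputable def eU (i : Fin (n - 1)) : PathAlg k n :=
  RingQuot.mkAlgHom k (PathRel k n) (FreeAlgebra.ι k (PathGen.up i))

/-- Image of a down arrow. -/
noncomputable def eD (i : Fin (n - 1)) : PathAlg k n :=
  RingQuot.mkAlgHom k (PathRel k n) (FreeAlgebra.ι k (PathGen.down i))

/-- The loop `X i = (i+1 | i | i+1)`. -/
noncomputable def eX (i : Fin (n - 1)) : PathAlg k n := eU k n i * eD k n i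

variable {k n}

lemma eV_mul (a b : Fin n) : eV k n a * eV k n b = if a = b then eV k n a else 0 := by
  have := RingQuot.mkAlgHom_rel k (PathRel.mul_vert (k := k) (n := n) a b)
  rw [map_mul] at this
  rw [eV, eV, this, apply_ite (RingQuot.mkAlgHom k (PathRel k n)), map_zero]

lemma eU_src (i : Fin (n - 1)) : eU k n i * eV k n (PathGen.src i) = eU k n i := by
  have := RingQuot.mkAlgHom_rel k (PathRel.up_src (k := k) (n := n) i)
  rw [map_mul] at this; exact this

lemma tgt_eU (i : Fin (n - 1)) : eV k n (PathGen.tgt i) * eU k n i = eU k n i := by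
  have := RingQuot.mkAlgHom_rel k (PathRel.tgt_up (k := k) (n := n) i)
  rw [map_mul] at this; exact this

lemma eD_tgt (i : Fin (n - 1)) : eD k n i * eV k n (PathGen.tgt i) = eD k n i := by
  have := RingQuot.mkAlgHom_rel k (PathRel.down_tgt (k := k) (n := n) i)
  rw [map_mul] at this; exact this

lemma eDU_zero (i : Fin (n - 1)) (h : (i : ℕ) = 0) : eD k n i * eU k n i = 0 := by
  have := RingQuot.mkAlgHom_rel k (PathRel.loop_first (k := k) (n := n) i h)
  rw [map_mul, map_zero] at this; exact this

lemma eUD_eq (i j : Fin (n - 1)) (h : (j : ℕ) = (i : ℕ) + 1) :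
    eU k n i * eD k n i = eD k n j * eU k n j := by
  have := RingQuot.mkAlgHom_rel k (PathRel.loop_eq (k := k) (n := n) i j h)
  rw [map_mul, map_mul] at this; exact this

lemma eDU_ne (i j : Fin (n - 1)) (h : i ≠ j) : eD k n i * eU k n j = 0 := by
  have htgt : PathGen.tgt i ≠ PathGen.tgt (n := n) j := by
    intro hc
    apply h
    apply Fin.ext
    have := congrArg Fin.val hc
    simpa [PathGen.tgt] using this
  calc eD k n i * eU k n j
      = (eD k n i * eV k n (PathGen.tgt i)) * (eV k n (PathGen.tgt j) * eU k n j) := by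
        rw [eD_tgt, tgt_eU]
    _ = eD k n i * (eV k n (PathGen.tgt i) * eV k n (PathGen.tgt j)) * eU k n j := by
        rw [mul_assoc, mul_assoc, mul_assoc]
    _ = 0 := by rw [eV_mul, if_neg htgt]; simp

lemma eX_mul_eX (i j : Fin (n - 1)) (h : i ≠ j) : eX k n i * eX k n j = 0 := by
  rw [eX, eX]
  calc eU k n i * eD k n i * (eU k n j * eD k n j)
      = eU k n i * (eD k n i * eU k n j) * eD k n j := by
        rw [mul_assoc, mul_assoc, mul_assoc]
    _ = 0 := by rw [eDU_ne i j h]; simp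

lemma eX_pow (i : Fin (n - 1)) (m : ℕ) :
    eX k n i ^ (m + 1) = eU k n i * ((eD k n i * eU k n i) ^ m * eD k n i) := by
  induction m with
  | zero => simp [eX]
  | succ p ih =>
      rw [pow_succ, ih, eX]
      simp only [pow_succ]
      simp [mul_assoc]

lemma eX_pow_zero : ∀ (m : ℕ) (i : Fin (n - 1)), (i : ℕ) = m → eX k n i ^ (m + 2) = 0 := by
  intro m
  induction m with
  | zero =>
      intro i hi
      rw [eX_pow, eDU_zero i hi]
      simp
  | succ p ih =>
      intro i hi
      have hp : p < n - 1 := by have := i.2; omega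
      have hDU : eD k n i * eU k n i = eX k n ⟨p, hp⟩ := by
        rw [eX, eUD_eq ⟨p, hp⟩ i (by simp [hi])]
      rw [eX_pow, hDU, ih ⟨p, hp⟩ rfl]
      simp

lemma eX_pow_high (i : Fin (n - 1)) (m : ℕ) (h : (i : ℕ) + 2 ≤ m) : eX k n i ^ m = 0 := by
  have : m = ((i : ℕ) + 2) + (m - ((i : ℕ) + 2)) := by omega
  rw [this, pow_add, eX_pow_zero (i : ℕ) i rfl, zero_mul]

lemma cElt_eq_sum : cElt k n = ∑ i : Fin (n - 1), eX k n i := rfl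

lemma cElt_pow (m : ℕ) : cElt k n ^ (m + 1) = ∑ i : Fin (n - 1), eX k n i ^ (m + 1) := by
  induction m with
  | zero => simp [cElt_eq_sum]
  | succ p ih =>
      rw [pow_succ, ih, cElt_eq_sum, Finset.sum_mul]
      refine Finset.sum_congr rfl (fun i _ => ?_)
      rw [Finset.mul_sum]
      rw [Finset.sum_eq_single i (fun b _ hb => ?_) (by simp)]
      · rw [← pow_succ]
      · rw [pow_succ, mul_assoc, eX_mul_eX i b (Ne.symm hb)]
        simp

lemma repA_eX (i : Fin (n - 1)) : repA k n (eX k n i) =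
    opE k n (fun p => (p.1 = PathGen.tgt i ∧ 1 ≤ p.2) ∧ p.2 - 1 ≤ (i : ℕ))
      (fun p => (PathGen.tgt i, p.2 - 1)) := by
  rw [eX, map_mul, eU, eD, repA_gen, repA_gen]
  simp only [repGen]
  rw [opE_mul]
  exact opE_congr (fun p => ⟨by simp, fun _ => rfl⟩)

lemma repA_eX_pow_apply (i : Fin (n - 1)) :
    ∀ (s : ℕ) (f : WSp k n) (l : ℕ), s ≤ l → l ≤ (i : ℕ) + 1 →
      (repA k n (eX k n i) ^ s) f (PathGen.tgt i, l) = f (PathGen.tgt i, l - s) := by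
  intro s
  induction s with
  | zero => intro f l _ _; simp
  | succ t ih =>
      intro f l hs hl
      rw [pow_succ, Module.End.mul_apply, ih _ l (by omega) hl]
      rw [repA_eX, opE_apply, if_pos ⟨⟨rfl, by omega⟩, by omega⟩]
      congr 2

end Aux

/-- in `A_n^!` the element `c = Σ_{i=2}^{n} (i|i-1|i)` satisfies
`c^n = 0` but `c^{n-1} ≠ 0`. -/
theorem cElt_nilpotency (k : Type*) [Field k] (n : ℕ) (hn : 0 < n) :
    cElt k n ^ n = 0 ∧ cElt k n ^ (n - 1) ≠ 0 := by
  constructor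
  · obtain ⟨m, rfl⟩ : ∃ m, n = m + 1 := ⟨n - 1, by omega⟩
    rw [cElt_pow]
    apply Finset.sum_eq_zero
    intro i _
    exact eX_pow_high i (m + 1) (by have := i.2; omega)
  · rcases Nat.lt_or_ge n 2 with h2 | h2
    · interval_cases n
      rw [pow_zero]
      intro hz
      have := congrArg (repA k 1) hz
      rw [map_one, map_zero] at this
      have happ := congrArg
        (fun T : Module.End k (WSp k 1) => T (fun _ => (1 : k)) (⟨0, hn⟩, 0)) this
      simp at happ
    · obtain ⟨m, rfl⟩ : ∃ m, n = m + 2 := ⟨n - 2, by omega⟩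
      have hm : m < m + 2 - 1 := by omega
      have hsum : cElt k (m + 2) ^ (m + 2 - 1) = eX k (m + 2) ⟨m, hm⟩ ^ (m + 1) := by
        show cElt k (m + 2) ^ (m + 1) = eX k (m + 2) ⟨m, hm⟩ ^ (m + 1)
        rw [cElt_pow, Finset.sum_eq_single ⟨m, hm⟩ (fun b _ hb => ?_) (by simp)]
        have hb' : b.1 ≠ m := fun hc => hb (Fin.ext hc)
        exact eX_pow_high b (m + 1) (by have := b.2; omega)
      rw [hsum]
      intro hz
      have h0 := congrArg (repA k (m + 2)) hz
      rw [map_pow, map_zero] at h0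
      have happ := congrArg
        (fun T : Module.End k (WSp k (m + 2)) =>
          T (fun p => if p = (PathGen.tgt ⟨m, hm⟩, 0) then (1 : k) else 0)
            (PathGen.tgt ⟨m, hm⟩, m + 1)) h0
      rw [repA_eX_pow_apply ⟨m, hm⟩ (m + 1) _ (m + 1) le_rfl (by simp)] at happ
      simp at happ
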